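/- (Combinatorial existence lemma, general case) Let m ≥ 1 and group sizes p₁,…,p_m ≥ 1; let K = Π_φ {1,…,p_φ} be the set of multi-indices κ = (κ₁,…,κ_m). Given strictly positive reals λ^φ_κ > 0 for every φ ∈ {1,…,m} and κ ∈ K, and target ratios k^φ_j > 0 for every φ and j ∈ {1,…,p_φ−1}, there exist strictly positive weights γ_κ > 0 such that for every group φ and every j ∈ {1,…,p_φ−1}: (Σ_{κ : κ_φ = j+1} γ_κ λ^φ_κ) / (Σ_{κ : κ_φ = 1} γ_κ λ^φ_κ) = k^φ_j. -/

import Mathlib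

open Finset

private lemma sum_cons_aux {m : ℕ} (p : Fin (m + 1) → ℕ)
    (g : ((ψ : Fin (m + 1)) → Fin (p ψ)) → ℝ) :
    ∑ κ : ((ψ : Fin (m + 1)) → Fin (p ψ)), g κ
      = ∑ r : Fin (p 0), ∑ κ' : ((ψ : Fin m) → Fin (p ψ.succ)), g (Fin.cons r κ') := by
  rw [← Equiv.sum_comp (Fin.consEquiv (fun ψ => Fin (p ψ))) g, Fintype.sum_prod_type]
  rfl

private lemma sum_sum_ite {α β : Type*} [Fintype α] [Fintype β] [DecidableEq α]
    (j : α) (f : α → β → ℝ) :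
    (∑ x : α, ∑ y : β, if x = j then f x y else 0) = ∑ y : β, f j y := by
  rw [Finset.sum_comm]
  simp [Finset.sum_ite_eq' Finset.univ j]

private lemma aux : ∀ (m : ℕ) (p : Fin m → ℕ) (hp : ∀ φ, 0 < p φ)
    (lam : (φ : Fin m) → ((ψ : Fin m) → Fin (p ψ)) → ℝ)
    (_ : ∀ φ κ, 0 < lam φ κ)
    (k : (φ : Fin m) → Fin (p φ) → ℝ) (_ : ∀ φ j, 0 < k φ j),
    ∃ γ : ((ψ : Fin m) → Fin (p ψ)) → ℝ, (∀ κ, 0 < γ κ) ∧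
      ∀ (φ : Fin m) (j : Fin (p φ)), j ≠ ⟨0, hp φ⟩ →
        (∑ κ ∈ Finset.univ.filter (fun κ => κ φ = j), γ κ * lam φ κ) =
          k φ j * ∑ κ ∈ Finset.univ.filter (fun κ => κ φ = ⟨0, hp φ⟩), γ κ * lam φ κ := by
  intro m
  induction m with
  | zero =>
    intro p hp lam hlam k hk
    exact ⟨fun _ => 1, fun _ => one_pos, fun φ => φ.elim0⟩
  | succ m IH =>
    intro p hp lam hlam k hk
    have hp' : ∀ ψ : Fin m, 0 < p ψ.succ := fun ψ => hp ψ.succ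
    choose δ hδpos hδ using fun r : Fin (p 0) =>
      IH (fun ψ => p ψ.succ) hp'
        (fun ψ κ' => lam ψ.succ (Fin.cons r κ'))
        (fun ψ κ' => hlam ψ.succ _)
        (fun ψ => k ψ.succ) (fun ψ j => hk ψ.succ j)
    haveI : ∀ ψ : Fin m, Nonempty (Fin (p ψ.succ)) := fun ψ => ⟨⟨0, hp' ψ⟩⟩
    set S : Fin (p 0) → ℝ :=
      fun r => ∑ κ' : ((ψ : Fin m) → Fin (p ψ.succ)), δ r κ' * lam 0 (Fin.cons r κ') with hS
    have hSpos : ∀ r, 0 < S r := by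
      intro r
      apply Finset.sum_pos
      · intro κ' _
        exact mul_pos (hδpos r κ') (hlam 0 _)
      · exact Finset.univ_nonempty
    set z : Fin (p 0) := ⟨0, hp 0⟩ with hz
    set t : Fin (p 0) → ℝ :=
      fun r => if r = z then 1 else k 0 r * S z / S r with ht
    have htpos : ∀ r, 0 < t r := by
      intro r
      rw [ht]
      dsimp only
      split
      · exact one_pos
      · exact div_pos (mul_pos (hk 0 r) (hSpos z)) (hSpos r)
    refine ⟨fun κ => t (κ 0) * δ (κ 0) (Fin.tail κ),
      fun κ => mul_pos (htpos _) (hδpos _ _), ?_⟩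
    intro φ
    refine Fin.cases ?_ ?_ φ
    · -- φ = 0
      intro j hj
      rw [Finset.sum_filter, Finset.sum_filter, sum_cons_aux, sum_cons_aux]
      simp only [Fin.cons_zero, Fin.tail_cons]
      rw [sum_sum_ite j (fun r κ' => t r * δ r κ' * lam 0 (Fin.cons r κ')),
        sum_sum_ite z (fun r κ' => t r * δ r κ' * lam 0 (Fin.cons r κ'))]
      have hLj : (∑ κ' : ((ψ : Fin m) → Fin (p ψ.succ)),
          t j * δ j κ' * lam 0 (Fin.cons j κ')) = t j * S j := by
        rw [hS, Finset.mul_sum]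
        exact Finset.sum_congr rfl fun κ' _ => by ring
      have hLz : (∑ κ' : ((ψ : Fin m) → Fin (p ψ.succ)),
          t z * δ z κ' * lam 0 (Fin.cons z κ')) = t z * S z := by
        rw [hS, Finset.mul_sum]
        exact Finset.sum_congr rfl fun κ' _ => by ring
      rw [hLj, hLz]
      have htj : t j = k 0 j * S z / S j := by rw [ht]; simp [hj, hz]
      have htz : t z = 1 := by rw [ht]; simp
      rw [htj, htz, one_mul, div_mul_eq_mul_div, mul_div_assoc, div_self (hSpos j).ne', mul_one]
    · -- φ = ψ.succ
      intro ψ j hj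
      rw [Finset.sum_filter, Finset.sum_filter, sum_cons_aux, sum_cons_aux]
      simp only [Fin.cons_succ, Fin.cons_zero, Fin.tail_cons]
      have key : ∀ (i : Fin (p ψ.succ)),
          (∑ r : Fin (p 0), ∑ κ' : ((ψ' : Fin m) → Fin (p ψ'.succ)),
            if κ' ψ = i then t r * δ r κ' * lam ψ.succ (Fin.cons r κ') else 0)
          = ∑ r : Fin (p 0), t r *
              ∑ κ' ∈ Finset.univ.filter (fun κ' => κ' ψ = i),
                δ r κ' * lam ψ.succ (Fin.cons r κ') := by
        intro i
        refine Finset.sum_congr rfl fun r _ => ?_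
        rw [Finset.mul_sum, Finset.sum_filter]
        refine Finset.sum_congr rfl fun κ' _ => ?_
        split <;> ring
      rw [key j, key ⟨0, hp ψ.succ⟩, Finset.mul_sum]
      refine Finset.sum_congr rfl fun r _ => ?_
      rw [hδ r ψ j hj]
      ring

theorem stmt_11 (m : ℕ) (p : Fin m → ℕ) (hp : ∀ φ, 0 < p φ)
    (lam : (φ : Fin m) → ((ψ : Fin m) → Fin (p ψ)) → ℝ)
    (hlam : ∀ φ κ, 0 < lam φ κ)
    (k : (φ : Fin m) → Fin (p φ) → ℝ) (hk : ∀ φ j, 0 < k φ j) :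
    ∃ γ : ((ψ : Fin m) → Fin (p ψ)) → ℝ, (∀ κ, 0 < γ κ) ∧
      ∀ (φ : Fin m) (j : Fin (p φ)), j ≠ ⟨0, hp φ⟩ →
        (∑ κ ∈ Finset.univ.filter (fun κ => κ φ = j), γ κ * lam φ κ) =
          k φ j * ∑ κ ∈ Finset.univ.filter (fun κ => κ φ = ⟨0, hp φ⟩), γ κ * lam φ κ := by
  exact aux m p hp lam hlam k hk
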